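/- Let e ≥ 1 and let b : Fin e → B, w : Fin e → W be the incidence maps of a finite connected bipartite graph, and let (σ, τ) be a pair in the set F of admissible permutation pairs. If a permutation η of Fin e commutes with both σ and τ, then there exist bijections β : B ≃ B and ω : W ≃ W with b ∘ η = β ∘ b and w ∘ η = ω ∘ w. Consequently, the centralizer of the subgroup generated by σ and τ in the permutation group of Fin e coincides with the stabilizer of the pair (σ, τ) under the conjugation action of the bipartite graph automorphism group (this common group is the orientation-preserving automorphism group of the dessin d'enfant determined by (σ, τ)). -/

import Mathlib

/-- `(σ, τ)` is an admissible pair for the bipartite graph with incidence maps `b` and `w`: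
the orbits of `σ` are exactly the fibers of `b` and the orbits of `τ` are exactly the
fibers of `w`. -/
def IsAdmissiblePair {e : ℕ} {B W : Type*} (b : Fin e → B) (w : Fin e → W)
    (σ τ : Equiv.Perm (Fin e)) : Prop :=
  (∀ k k' : Fin e, (∃ n : ℤ, (σ ^ n) k = k') ↔ b k = b k') ∧
  (∀ k k' : Fin e, (∃ n : ℤ, (τ ^ n) k = k') ↔ w k = w k')

private lemma descend_aux {e : ℕ} {X : Type*} [Fintype X] (f : Fin e → X)
    (hf : Function.Surjective f) (σ : Equiv.Perm (Fin e))
    (h : ∀ k k' : Fin e, (∃ n : ℤ, (σ ^ n) k = k') ↔ f k = f k')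
    (η : Equiv.Perm (Fin e)) (hc : η * σ = σ * η) :
    ∃ β : X ≃ X, f ∘ η = β ∘ f := by
  have hcomm : Commute η σ := hc
  have hstep : ∀ k k' : Fin e, f k = f k' → f (η k) = f (η k') := by
    intro k k' hkk'
    obtain ⟨n, hn⟩ := (h k k').mpr hkk'
    refine (h (η k) (η k')).mp ⟨n, ?_⟩
    have hz : η * σ ^ n = σ ^ n * η := (hcomm.zpow_right n).eq
    calc (σ ^ n) (η k) = (σ ^ n * η) k := rfl
      _ = (η * σ ^ n) k := by rw [hz]
      _ = η ((σ ^ n) k) := rfl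
      _ = η k' := by rw [hn]
  let g : X → X := fun x => f (η (Function.surjInv hf x))
  have hg : ∀ k, g (f k) = f (η k) := fun k =>
    hstep _ _ (Function.surjInv_eq hf (f k))
  have hgs : Function.Surjective g := by
    intro y
    obtain ⟨k, rfl⟩ := hf y
    refine ⟨f (η⁻¹ k), ?_⟩
    rw [hg, ← Equiv.Perm.mul_apply, mul_inv_cancel, Equiv.Perm.one_apply]
  have hbij : Function.Bijective g := Finite.surjective_iff_bijective.mp hgs
  exact ⟨Equiv.ofBijective g hbij, funext fun k => (hg k).symm⟩

theorem stmt1 {e : ℕ} (he : 1 ≤ e) {B W : Type*} [Fintype B] [Fintype W]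
    (b : Fin e → B) (w : Fin e → W) (hb : Function.Surjective b) (hw : Function.Surjective w)
    (hconn : ∀ k k' : Fin e,
      Relation.EqvGen (fun k k' => b k = b k' ∨ w k = w k') k k')
    (σ τ : Equiv.Perm (Fin e)) (hF : IsAdmissiblePair b w σ τ) :
    (∀ η : Equiv.Perm (Fin e), η * σ = σ * η → η * τ = τ * η →
      ∃ (β : B ≃ B) (ω : W ≃ W), b ∘ η = β ∘ b ∧ w ∘ η = ω ∘ w) ∧
    ((Subgroup.centralizer
        ((Subgroup.closure {σ, τ} : Subgroup (Equiv.Perm (Fin e))) : Set (Equiv.Perm (Fin e))) :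
        Set (Equiv.Perm (Fin e))) =
      {π : Equiv.Perm (Fin e) |
        (∃ (β : B ≃ B) (ω : W ≃ W), b ∘ π = β ∘ b ∧ w ∘ π = ω ∘ w) ∧
        π * σ * π⁻¹ = σ ∧ π * τ * π⁻¹ = τ}) := by
  have main : ∀ η : Equiv.Perm (Fin e), η * σ = σ * η → η * τ = τ * η →
      ∃ (β : B ≃ B) (ω : W ≃ W), b ∘ η = β ∘ b ∧ w ∘ η = ω ∘ w := by
    intro η hσ hτ
    obtain ⟨β, hβ⟩ := descend_aux b hb σ hF.1 η hσ
    obtain ⟨ω, hω⟩ := descend_aux w hw τ hF.2 η hτ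
    exact ⟨β, ω, hβ, hω⟩
  have hcent : ∀ π : Equiv.Perm (Fin e),
      π ∈ Subgroup.centralizer
        ((Subgroup.closure {σ, τ} : Subgroup (Equiv.Perm (Fin e))) : Set (Equiv.Perm (Fin e)))
      ↔ (π * σ = σ * π ∧ π * τ = τ * π) := by
    intro π
    rw [Subgroup.mem_centralizer_iff]
    constructor
    · intro h
      have hσmem : σ ∈ Subgroup.closure ({σ, τ} : Set (Equiv.Perm (Fin e))) :=
        Subgroup.subset_closure (by simp)
      have hτmem : τ ∈ Subgroup.closure ({σ, τ} : Set (Equiv.Perm (Fin e))) :=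
        Subgroup.subset_closure (by simp)
      exact ⟨(h σ hσmem).symm, (h τ hτmem).symm⟩
    · rintro ⟨h1, h2⟩ g hg
      have : Commute g π := by
        induction hg using Subgroup.closure_induction with
        | mem x hx =>
          rcases hx with rfl | rfl
          · exact h1.symm
          · exact h2.symm
        | one => exact Commute.one_left π
        | mul x y _ _ hx hy => exact hx.mul_left hy
        | inv x _ hx => exact hx.inv_left
      exact this
  refine ⟨main, ?_⟩
  ext π
  simp only [Set.mem_setOf_eq, SetLike.mem_coe, hcent π]
  constructor
  · rintro ⟨h1, h2⟩
    refine ⟨main π h1 h2, ?_, ?_⟩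
    · rw [h1, mul_inv_cancel_right]
    · rw [h2, mul_inv_cancel_right]
  · rintro ⟨-, h1, h2⟩
    constructor
    · simpa [mul_assoc] using congrArg (· * π) h1
    · simpa [mul_assoc] using congrArg (· * π) h2
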